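/- Let C be a skeletal finite EI category and k a field such that for every object x the group Aut_C(x) has order invertible in k. Then the Jacobson radical of the category algebra kC equals the k-linear span of the non-isomorphisms of C, and the quotient algebra kC / rad(kC) is isomorphic to the direct product over all objects x of the group algebras k Aut_C(x). -/

import Mathlib

open CategoryTheory
open scoped Classical

/-- Witness that `A` is the category algebra `kC` of the finite category `C`: it has a
`k`-basis indexed by the morphisms of `C`, the product of two basis elements is the basis
element of their composite when composable and `0` otherwise, and the identity element is
the sum of the identity morphisms. -/
structure CategoryAlgebraData (k : Type*) [Field k] (C : Type*) [Category C] [Fintype C]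
    (A : Type*) [Ring A] [Algebra k A] where
  basis : Module.Basis (Σ x y : C, x ⟶ y) k A
  basis_mul_basis : ∀ (x₁ y₁ x₂ y₂ : C) (f : x₁ ⟶ y₁) (g : x₂ ⟶ y₂),
    basis ⟨x₁, y₁, f⟩ * basis ⟨x₂, y₂, g⟩ =
      if h : y₂ = x₁ then basis ⟨x₂, y₁, g ≫ eqToHom h ≫ f⟩ else 0
  one_def : (1 : A) = ∑ x : C, basis ⟨x, x, 𝟙 x⟩

namespace Stmt6Aux


theorem jacobson_bot_of_isSemisimpleRing (T : Type*) [Ring T] [IsSemisimpleRing T] :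
    Ideal.jacobson (⊥ : Ideal T) = ⊥ := by
  obtain ⟨y, hy⟩ := ComplementedLattice.exists_isCompl (Ideal.jacobson (⊥ : Ideal T))
  rcases eq_top_or_exists_le_coatom y with h | ⟨m, hm, hym⟩
  · rw [h] at hy
    exact disjoint_top.mp hy.disjoint
  · exfalso
    have hmax : Ideal.IsMaximal m := Ideal.isMaximal_def.mpr hm
    have hJm : Ideal.jacobson (⊥ : Ideal T) ≤ m := sInf_le ⟨bot_le, hmax⟩
    exact hm.1 (top_le_iff.mp (hy.codisjoint hJm hym))

noncomputable def mapRangeHom {k k' : Type*} {G : Type*} [Semiring k] [Semiring k']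
    [Monoid G] (e : k ≃+* k') : MonoidAlgebra k G →+ MonoidAlgebra k' G :=
  (MonoidAlgebra.mapRingHom G e.toRingHom).toAddMonoidHom

theorem mapRangeHom_single {k k' : Type*} {G : Type*} [Semiring k] [Semiring k']
    [Monoid G] (e : k ≃+* k') (a : G) (b : k) :
    mapRangeHom e (MonoidAlgebra.single a b) = MonoidAlgebra.single a (e b) :=
  MonoidAlgebra.mapRingHom_single ..

theorem mapRangeHom_apply {k k' : Type*} {G : Type*} [Semiring k] [Semiring k']
    [Monoid G] (e : k ≃+* k') (f : MonoidAlgebra k G) (a : G) :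
    (mapRangeHom e f).coeff a = e (f.coeff a) := by
  simp [mapRangeHom]

theorem mapRange_mul {k k' : Type*} {G : Type*} [Semiring k] [Semiring k']
    [Monoid G] (e : k ≃+* k') (f g : MonoidAlgebra k G) :
    mapRangeHom e (f * g) = mapRangeHom e f * mapRangeHom e g := by
  exact map_mul (MonoidAlgebra.mapRingHom G e.toRingHom) f g

noncomputable def mapRangeRingEquiv {k k' : Type*} {G : Type*} [Semiring k] [Semiring k']
    [Monoid G] (e : k ≃+* k') : MonoidAlgebra k G ≃+* MonoidAlgebra k' G where
  toFun := mapRangeHom e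
  invFun := mapRangeHom e.symm
  left_inv f := by ext a; simp [mapRangeHom_apply]
  right_inv f := by ext a; simp [mapRangeHom_apply]
  map_add' f g := map_add _ f g
  map_mul' f g := mapRange_mul e f g

theorem isSemisimpleRing_monoidAlgebra {k : Type u} [Field k] {G : Type v} [Group G] [Fintype G]
    (h : (Fintype.card G : k) ≠ 0) : IsSemisimpleRing (MonoidAlgebra k G) := by
  haveI : NeZero (Nat.card G : k) := ⟨by rwa [Nat.card_eq_fintype_card]⟩
  exact inferInstance



section EI

variable {C : Type*} [Category C]

theorem idem_id (hEI : ∀ (x : C) (f : x ⟶ x), IsIso f) {x : C} (e : x ⟶ x)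
    (h : e ≫ e = e) : e = 𝟙 x := by
  haveI := hEI x e
  calc e = (e ≫ e) ≫ inv e := by rw [Category.assoc, IsIso.hom_inv_id, Category.comp_id]
  _ = e ≫ inv e := by rw [h]
  _ = 𝟙 x := IsIso.hom_inv_id e

theorem isIso_of_section (hEI : ∀ (x : C) (f : x ⟶ x), IsIso f) {x y : C} (f : x ⟶ y)
    (u : y ⟶ x) (hu : f ≫ u = 𝟙 x) : IsIso f := by
  have h : (u ≫ f) ≫ u ≫ f = u ≫ f := by
    rw [Category.assoc, ← Category.assoc f u f, hu, Category.id_comp]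
  exact ⟨⟨u, hu, idem_id hEI _ h⟩⟩

theorem isIso_of_retraction (hEI : ∀ (x : C) (f : x ⟶ x), IsIso f) {x y : C} (f : x ⟶ y)
    (u : y ⟶ x) (hu : u ≫ f = 𝟙 y) : IsIso f := by
  have h : (f ≫ u) ≫ f ≫ u = f ≫ u := by
    rw [Category.assoc, ← Category.assoc u f u, hu, Category.id_comp]
  exact ⟨⟨u, idem_id hEI _ h, hu⟩⟩

theorem noniso_comp_left (hEI : ∀ (x : C) (f : x ⟶ x), IsIso f) {x y z : C} (f : x ⟶ y)
    (g : y ⟶ z) (hf : ¬ IsIso f) : ¬ IsIso (f ≫ g) := by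
  intro h
  haveI := h
  exact hf (isIso_of_section hEI f (g ≫ inv (f ≫ g))
    (by rw [← Category.assoc, IsIso.hom_inv_id]))

theorem noniso_comp_right (hEI : ∀ (x : C) (f : x ⟶ x), IsIso f) {x y z : C} (f : x ⟶ y)
    (g : y ⟶ z) (hg : ¬ IsIso g) : ¬ IsIso (f ≫ g) := by
  intro h
  haveI := h
  exact hg (isIso_of_retraction hEI g (inv (f ≫ g) ≫ f)
    (by rw [Category.assoc, IsIso.inv_hom_id]))

theorem ne_of_noniso (hEI : ∀ (x : C) (f : x ⟶ x), IsIso f) {x y : C} (f : x ⟶ y)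
    (hf : ¬ IsIso f) : x ≠ y := by
  rintro rfl
  exact hf (hEI x f)

theorem noniso_of_ne (hskel : ∀ x y : C, (x ≅ y) → x = y) {x y : C} (f : x ⟶ y)
    (h : x ≠ y) : ¬ IsIso f := fun hf => h (hskel x y (@asIso _ _ _ _ f hf))

end EI

section Rank

variable {C : Type*} [Category C] [Fintype C]

noncomputable def rk (x : C) : ℕ := (Finset.univ.filter fun z : C => Nonempty (z ⟶ x)).card

theorem one_le_rk (x : C) : 1 ≤ rk x :=
  Finset.card_pos.mpr ⟨x, Finset.mem_filter.mpr ⟨Finset.mem_univ x, ⟨𝟙 x⟩⟩⟩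

theorem rk_le_card (x : C) : rk x ≤ Fintype.card C :=
  (Finset.card_filter_le _ _).trans (le_of_eq Finset.card_univ)

theorem rk_lt (hEI : ∀ (x : C) (f : x ⟶ x), IsIso f) {x y : C} (f : x ⟶ y)
    (hf : ¬ IsIso f) : rk x < rk y := by
  apply Finset.card_lt_card
  have hsub : (Finset.univ.filter fun z : C => Nonempty (z ⟶ x)) ⊆
      (Finset.univ.filter fun z : C => Nonempty (z ⟶ y)) := by
    intro z hz
    rcases Finset.mem_filter.mp hz with ⟨-, ⟨g⟩⟩
    exact Finset.mem_filter.mpr ⟨Finset.mem_univ z, ⟨g ≫ f⟩⟩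
  refine (Finset.ssubset_iff_of_subset hsub).mpr ⟨y, Finset.mem_filter.mpr
    ⟨Finset.mem_univ y, ⟨𝟙 y⟩⟩, ?_⟩
  intro hyx
  rcases Finset.mem_filter.mp hyx with ⟨-, ⟨g⟩⟩
  haveI := hEI x (f ≫ g)
  exact hf (isIso_of_section hEI f (g ≫ inv (f ≫ g))
    (by rw [← Category.assoc, IsIso.hom_inv_id]))

end Rank

end Stmt6Aux

namespace Stmt6Aux

section SpanAlg

variable {k : Type*} [Field k] {C : Type*} [Category C] [Fintype C]
  {A : Type*} [Ring A] [Algebra k A]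

theorem span_mul_span {s t u : Set A}
    (h : ∀ a ∈ s, ∀ b ∈ t, a * b ∈ Submodule.span k u) :
    ∀ a ∈ Submodule.span k s, ∀ b ∈ Submodule.span k t, a * b ∈ Submodule.span k u := by
  have step : ∀ a ∈ s, ∀ b ∈ Submodule.span k t, a * b ∈ Submodule.span k u := by
    intro a ha b hb
    have h2 : t ⊆ ((Submodule.span k u).comap (LinearMap.mulLeft k a) : Set A) :=
      fun b' hb' => h a ha b' hb'
    have := Submodule.span_le.mpr h2 hb
    simpa using this
  intro a ha b hb
  have h2 : s ⊆ ((Submodule.span k u).comap (LinearMap.mulRight k b) : Set A) :=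
    fun a' ha' => step a' ha' b hb
  have := Submodule.span_le.mpr h2 ha
  simpa using this

variable (hA : CategoryAlgebraData k C A)

def NIso : Set A := {a : A | ∃ (x y : C) (f : x ⟶ y), ¬ IsIso f ∧ a = hA.basis ⟨x, y, f⟩}

def NIsoN (n : ℕ) : Set A :=
  {a : A | ∃ (x y : C) (f : x ⟶ y), ¬ IsIso f ∧ rk x + n ≤ rk y ∧ a = hA.basis ⟨x, y, f⟩}

theorem basis_mul_mem (hEI : ∀ (x : C) (f : x ⟶ x), IsIso f) :
    ∀ a ∈ Set.range hA.basis, ∀ b ∈ NIso hA, a * b ∈ Submodule.span k (NIso hA) := by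
  rintro a ⟨⟨x₁, y₁, f⟩, rfl⟩ b ⟨x₂, y₂, g, hg, rfl⟩
  rw [hA.basis_mul_basis]
  split
  · exact Submodule.subset_span ⟨x₂, y₁, _, noniso_comp_left hEI g _ hg, rfl⟩
  · exact zero_mem _

theorem mul_mem_nIso (hEI : ∀ (x : C) (f : x ⟶ x), IsIso f) (a : A) :
    ∀ b ∈ Submodule.span k (NIso hA), a * b ∈ Submodule.span k (NIso hA) := by
  intro b hb
  have ha : a ∈ Submodule.span k (Set.range hA.basis) := by
    rw [hA.basis.span_eq]; trivial
  exact span_mul_span (basis_mul_mem hA hEI) a ha b hb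

theorem step_nIsoN (hEI : ∀ (x : C) (f : x ⟶ x), IsIso f) (n : ℕ) :
    ∀ a ∈ Submodule.span k (NIso hA), ∀ b ∈ Submodule.span k (NIsoN hA n),
      a * b ∈ Submodule.span k (NIsoN hA (n + 1)) := by
  apply span_mul_span
  rintro a ⟨x₁, y₁, f, hf, rfl⟩ b ⟨x₂, y₂, g, hg, hrk, rfl⟩
  rw [hA.basis_mul_basis]
  split
  · next h =>
    refine Submodule.subset_span ⟨x₂, y₁, _, noniso_comp_left hEI g _ hg, ?_, rfl⟩
    have h1 : rk x₁ < rk y₁ := rk_lt hEI f hf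
    subst h
    omega
  · exact zero_mem _

theorem nIso_le_nIsoN_one (hEI : ∀ (x : C) (f : x ⟶ x), IsIso f) :
    Submodule.span k (NIso hA) ≤ Submodule.span k (NIsoN hA 1) := by
  rw [Submodule.span_le]
  rintro a ⟨x, y, f, hf, rfl⟩
  exact Submodule.subset_span ⟨x, y, f, hf, rk_lt hEI f hf, rfl⟩

theorem pow_mem_nIsoN (hEI : ∀ (x : C) (f : x ⟶ x), IsIso f) {l : A}
    (hl : l ∈ Submodule.span k (NIso hA)) :
    ∀ n : ℕ, l ^ (n + 1) ∈ Submodule.span k (NIsoN hA (n + 1)) := by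
  intro n
  induction n with
  | zero => rw [pow_one]; exact nIso_le_nIsoN_one hA hEI hl
  | succ m ih =>
    rw [pow_succ']
    exact step_nIsoN hA hEI (m + 1) l hl _ ih

theorem nilpotent_of_mem_span (hEI : ∀ (x : C) (f : x ⟶ x), IsIso f) {l : A}
    (hl : l ∈ Submodule.span k (NIso hA)) : l ^ (Fintype.card C + 1) = 0 := by
  have h := pow_mem_nIsoN hA hEI hl (Fintype.card C)
  have hle : Submodule.span k (NIsoN hA (Fintype.card C + 1)) ≤ ⊥ := by
    rw [Submodule.span_le]
    rintro a ⟨x, y, f, hf, hrk, rfl⟩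
    exact absurd hrk (by have h1 := one_le_rk x; have h2 := rk_le_card y; omega)
  simpa using hle h

theorem span_le_jacobson (hEI : ∀ (x : C) (f : x ⟶ x), IsIso f) :
    ∀ a ∈ Submodule.span k (NIso hA), a ∈ Ideal.jacobson (⊥ : Ideal A) := by
  intro l hl
  rw [Ideal.jacobson, Submodule.mem_sInf]
  rintro J ⟨-, hmax⟩
  by_contra hnot
  have hco : IsCoatom J := Ideal.isMaximal_def.mp hmax
  have hlt : J < J ⊔ Submodule.span A {l} :=
    left_lt_sup.mpr fun hle => hnot ((Submodule.span_singleton_le_iff_mem l J).mp hle)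
  have htop : J ⊔ Submodule.span A {l} = ⊤ := hco.2 _ hlt
  have h1 : (1 : A) ∈ J ⊔ Submodule.span A {l} := by rw [htop]; trivial
  obtain ⟨m, hm, y, hy, hsum⟩ := Submodule.mem_sup.mp h1
  obtain ⟨a, rfl⟩ := Submodule.mem_span_singleton.mp hy
  have hal : a • l ∈ Submodule.span k (NIso hA) := by
    rw [smul_eq_mul]; exact mul_mem_nIso hA hEI a l hl
  have hnil : IsNilpotent (a • l) := ⟨_, nilpotent_of_mem_span hA hEI hal⟩
  have hunit : IsUnit m := by
    have hm1 : m = 1 - a • l := by rw [← hsum]; abel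
    rw [hm1]; exact hnil.isUnit_one_sub
  exact hmax.ne_top (Ideal.eq_top_of_isUnit_mem J hm hunit)

end SpanAlg

end Stmt6Aux

namespace Stmt6Aux

section Phi
set_option linter.unusedSectionVars false

variable {k : Type*} [Field k] {C : Type*} [Category C] [Fintype C]
  {A : Type*} [Ring A] [Algebra k A]
variable (hEI : ∀ (x : C) (f : x ⟶ x), IsIso f)

noncomputable def toAut {x y : C} (f : x ⟶ y) (h : x = y) : Aut x :=
  @asIso _ _ _ _ (f ≫ eqToHom h.symm) (hEI x _)

theorem toAut_hom {x : C} (f : x ⟶ x) : (toAut hEI f rfl).hom = f := by simp [toAut]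

noncomputable def gfun : (Σ x y : C, x ⟶ y) → (∀ x : C, MonoidAlgebra k (Aut x)) :=
  fun σ => if h : σ.1 = σ.2.1 then
    Pi.single σ.1 (MonoidAlgebra.single (toAut hEI σ.2.2 h) 1) else 0

theorem gfun_endo {x : C} (f : x ⟶ x) :
    gfun (k := k) hEI ⟨x, x, f⟩ = Pi.single x (MonoidAlgebra.single (toAut hEI f rfl) 1) :=
  dif_pos rfl

theorem gfun_ne {x y : C} (f : x ⟶ y) (h : x ≠ y) : gfun (k := k) hEI ⟨x, y, f⟩ = 0 :=
  dif_neg h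

variable (hA : CategoryAlgebraData k C A)

noncomputable def philin : A →ₗ[k] ∀ x : C, MonoidAlgebra k (Aut x) :=
  hA.basis.constr k (gfun hEI)

theorem philin_basis (σ : Σ x y : C, x ⟶ y) :
    philin hEI hA (hA.basis σ) = gfun hEI σ :=
  hA.basis.constr_basis k _ σ

theorem pi_single_mul_ne {x₁ x₂ : C} (h : x₁ ≠ x₂) (m₁ : MonoidAlgebra k (Aut x₁))
    (m₂ : MonoidAlgebra k (Aut x₂)) :
    (Pi.single x₁ m₁ : ∀ x : C, MonoidAlgebra k (Aut x)) * Pi.single x₂ m₂ = 0 := by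
  funext z
  rw [Pi.mul_apply, Pi.zero_apply]
  by_cases h1 : z = x₁
  · subst h1
    rw [Pi.single_eq_of_ne h, mul_zero]
  · rw [Pi.single_eq_of_ne h1, zero_mul]

theorem toAut_mul {x : C} (f g : x ⟶ x) :
    toAut hEI (g ≫ f) rfl = toAut hEI f rfl * toAut hEI g rfl := by
  rw [Aut.Aut_mul_def]
  apply Iso.ext
  simp [toAut]

theorem philin_basis_mul (hskel : ∀ x y : C, (x ≅ y) → x = y) (σ τ : Σ x y : C, x ⟶ y) :
    philin hEI hA (hA.basis σ * hA.basis τ)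
      = philin hEI hA (hA.basis σ) * philin hEI hA (hA.basis τ) := by
  obtain ⟨x₁, y₁, f⟩ := σ
  obtain ⟨x₂, y₂, g⟩ := τ
  rw [hA.basis_mul_basis, philin_basis, philin_basis]
  by_cases hcomp : y₂ = x₁
  · rw [dif_pos hcomp, philin_basis]
    by_cases h₁ : x₁ = y₁
    · by_cases h₂ : x₂ = y₂
      · subst h₂; subst h₁; subst hcomp
        rw [gfun_endo, gfun_endo, gfun_endo, ← Pi.single_mul,
          MonoidAlgebra.single_mul_single, one_mul, ← toAut_mul hEI f g]
        simp
      · have hg : ¬ IsIso g := noniso_of_ne hskel g h₂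
        have hcne : x₂ ≠ y₁ :=
          ne_of_noniso hEI _ (noniso_comp_left hEI g (eqToHom hcomp ≫ f) hg)
        rw [gfun_ne hEI _ hcne, gfun_ne hEI g h₂, mul_zero]
    · have hf : ¬ IsIso f := noniso_of_ne hskel f h₁
      have hcne : x₂ ≠ y₁ := by
        have h3 := noniso_comp_right hEI (g ≫ eqToHom hcomp) f hf
        rw [Category.assoc] at h3
        exact ne_of_noniso hEI _ h3
      rw [gfun_ne hEI _ hcne, gfun_ne hEI f h₁, zero_mul]
  · rw [dif_neg hcomp, map_zero]
    by_cases h₁ : x₁ = y₁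
    · by_cases h₂ : x₂ = y₂
      · subst h₁; subst h₂
        rw [gfun_endo, gfun_endo]
        exact (pi_single_mul_ne (fun he => hcomp he.symm) _ _).symm
      · rw [gfun_ne hEI g h₂, mul_zero]
    · rw [gfun_ne hEI f h₁, zero_mul]

theorem philin_mul (hskel : ∀ x y : C, (x ≅ y) → x = y) (a b : A) :
    philin hEI hA (a * b) = philin hEI hA a * philin hEI hA b := by
  have hFG : (LinearMap.mul k A).compr₂ (philin hEI hA)
      = (LinearMap.mul k (∀ x : C, MonoidAlgebra k (Aut x))).compl₁₂
          (philin hEI hA) (philin hEI hA) := by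
    apply LinearMap.ext_basis hA.basis hA.basis
    intro σ τ
    simpa using philin_basis_mul hEI hA hskel σ τ
  have h2 := LinearMap.congr_fun (LinearMap.congr_fun hFG a) b
  simpa using h2

theorem philin_one : philin hEI hA 1 = 1 := by
  rw [hA.one_def, map_sum]
  have h1 : ∀ x : C, philin hEI hA (hA.basis ⟨x, x, 𝟙 x⟩) = Pi.single x 1 := by
    intro x
    have h2 : toAut hEI (𝟙 x) rfl = 1 := Iso.ext (by simp only [toAut]; simp; rfl)
    rw [philin_basis, gfun_endo, h2, ← MonoidAlgebra.one_def]
  rw [Finset.sum_congr rfl fun x _ => h1 x]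
  exact Finset.univ_sum_single (fun x : C => (1 : MonoidAlgebra k (Aut x)))

noncomputable def phi (hskel : ∀ x y : C, (x ≅ y) → x = y) :
    A →ₐ[k] ∀ x : C, MonoidAlgebra k (Aut x) :=
  AlgHom.ofLinearMap (philin hEI hA) (philin_one hEI hA) (philin_mul hEI hA hskel)

theorem phi_apply (hskel : ∀ x y : C, (x ≅ y) → x = y) (a : A) :
    phi hEI hA hskel a = philin hEI hA a := rfl

end Phi

end Stmt6Aux

namespace Stmt6Aux

section Psi
set_option linter.unusedSectionVars false

variable {k : Type*} [Field k] {C : Type*} [Category C] [Fintype C]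
  {A : Type*} [Ring A] [Algebra k A]
variable (hEI : ∀ (x : C) (f : x ⟶ x), IsIso f) (hA : CategoryAlgebraData k C A)

theorem toAut_of_aut {x : C} (a : Aut x) : toAut hEI a.hom rfl = a :=
  Iso.ext (by simp [toAut])

theorem single_mem_range {x : C} (a : Aut x) (c : k) :
    (Pi.single x (MonoidAlgebra.single a c) : ∀ x : C, MonoidAlgebra k (Aut x))
      ∈ LinearMap.range (philin hEI hA) := by
  refine ⟨c • hA.basis ⟨x, x, a.hom⟩, ?_⟩
  rw [map_smul, philin_basis, gfun_endo, toAut_of_aut, ← Pi.single_smul,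
    MonoidAlgebra.smul_single', mul_one]

theorem pi_single_mem_range {x : C} (m : MonoidAlgebra k (Aut x)) :
    (Pi.single x m : ∀ x : C, MonoidAlgebra k (Aut x))
      ∈ LinearMap.range (philin hEI hA) := by
  have hdecomp : (Pi.single x m : ∀ x : C, MonoidAlgebra k (Aut x))
      = ∑ a ∈ m.coeff.support, Pi.single x (MonoidAlgebra.single a (m.coeff a)) := by
    have hms : m = ∑ a ∈ m.coeff.support, MonoidAlgebra.single a (m.coeff a) :=
      (MonoidAlgebra.sum_coeff_single m).symm
    conv_lhs => rw [hms]
    rw [← LinearMap.coe_single (R := k) (φ := fun z : C => MonoidAlgebra k (Aut z)) x]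
    rw [map_sum]
  rw [hdecomp]
  exact sum_mem fun a _ => single_mem_range hEI hA a (m.coeff a)

theorem philin_surjective : Function.Surjective (philin hEI hA) := by
  intro t
  have ht : t ∈ LinearMap.range (philin hEI hA) := by
    rw [← Finset.univ_sum_single t]
    exact sum_mem fun x _ => pi_single_mem_range hEI hA (t x)
  exact ht

noncomputable def psi : (∀ x : C, MonoidAlgebra k (Aut x)) →ₗ[k] A :=
  ∑ x : C, (((Finsupp.lsum k
      (fun a : Aut x => LinearMap.toSpanSingleton k A (hA.basis ⟨x, x, a.hom⟩))).comp
        (MonoidAlgebra.coeffLinearEquiv k : MonoidAlgebra k (Aut x) ≃ₗ[k] (Aut x →₀ k)).toLinearMap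
        : MonoidAlgebra k (Aut x) →ₗ[k] A).comp
    (LinearMap.proj (R := k) (φ := fun z : C => MonoidAlgebra k (Aut z)) x))

theorem psi_single {x : C} (a : Aut x) (c : k) :
    psi hA (Pi.single x (MonoidAlgebra.single a c)) = c • hA.basis ⟨x, x, a.hom⟩ := by
  rw [psi, LinearMap.sum_apply, Finset.sum_eq_single x]
  · show (Finsupp.lsum k
        (fun b : Aut x => LinearMap.toSpanSingleton k A (hA.basis ⟨x, x, b.hom⟩)))
        ((Pi.single x (MonoidAlgebra.single a c) : ∀ z : C, MonoidAlgebra k (Aut z)) x).coeff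
        = c • hA.basis ⟨x, x, a.hom⟩
    rw [Pi.single_eq_same, MonoidAlgebra.coeff_single]
    exact Finsupp.lsum_single k _ a c
  · intro z _ hz
    show (Finsupp.lsum k
        (fun b : Aut z => LinearMap.toSpanSingleton k A (hA.basis ⟨z, z, b.hom⟩)))
        ((Pi.single x (MonoidAlgebra.single a c) : ∀ w : C, MonoidAlgebra k (Aut w)) z).coeff
        = 0
    rw [Pi.single_eq_of_ne hz, MonoidAlgebra.coeff_zero, map_zero]
  · intro hx
    exact absurd (Finset.mem_univ x) hx

theorem psi_philin_basis (σ : Σ x y : C, x ⟶ y) :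
    psi hA (philin hEI hA (hA.basis σ)) =
      if σ.1 = σ.2.1 then hA.basis σ else 0 := by
  obtain ⟨x, y, f⟩ := σ
  rw [philin_basis]
  by_cases h : x = y
  · subst h
    rw [gfun_endo, psi_single, one_smul, if_pos rfl, toAut_hom]
  · rw [gfun_ne hEI f h, map_zero, if_neg h]

theorem mem_span_of_philin_eq_zero (hskel : ∀ x y : C, (x ≅ y) → x = y) (a : A)
    (ha : philin hEI hA a = 0) : a ∈ Submodule.span k (NIso hA) := by
  have hdelta : ∀ b : A,
      b - psi hA (philin hEI hA b) ∈ Submodule.span k (NIso hA) := by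
    intro b
    have hb : b ∈ Submodule.span k (Set.range hA.basis) := by
      rw [hA.basis.span_eq]; trivial
    have hsub : Set.range hA.basis ⊆
        ((Submodule.span k (NIso hA)).comap
          ((LinearMap.id : A →ₗ[k] A) - (psi hA).comp (philin hEI hA)) : Set A) := by
      rintro _ ⟨σ, rfl⟩
      show ((LinearMap.id : A →ₗ[k] A) - (psi hA).comp (philin hEI hA)) (hA.basis σ)
        ∈ Submodule.span k (NIso hA)
      rw [LinearMap.sub_apply, LinearMap.id_apply, LinearMap.comp_apply,
        psi_philin_basis hEI hA σ]
      split_ifs with h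
      · rw [sub_self]; exact zero_mem _
      · rw [sub_zero]
        obtain ⟨x, y, f⟩ := σ
        exact Submodule.subset_span ⟨x, y, f, noniso_of_ne hskel f h, rfl⟩
    have := Submodule.span_le.mpr hsub hb
    simpa using this
  have h2 := hdelta a
  rwa [ha, map_zero, sub_zero] at h2

theorem philin_eq_zero_of_mem_span (a : A) (ha : a ∈ Submodule.span k (NIso hA)) :
    philin hEI hA a = 0 := by
  have hsub : NIso hA ⊆ (LinearMap.ker (philin hEI hA) : Set A) := by
    rintro _ ⟨x, y, f, hf, rfl⟩
    have h0 : philin hEI hA (hA.basis ⟨x, y, f⟩) = 0 := by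
      rw [philin_basis, gfun_ne hEI f (ne_of_noniso hEI f hf)]
    exact LinearMap.mem_ker.mpr h0
  exact LinearMap.mem_ker.mp (Submodule.span_le.mpr hsub ha)

end Psi

end Stmt6Aux


open Stmt6Aux

/-- For a skeletal finite EI category `C` with all automorphism group orders invertible in
`k`, the Jacobson radical of `kC` is the span of the non-isomorphisms, and
`kC / rad(kC)` is isomorphic to the product of the group algebras `k Aut_C(x)`. -/
theorem stmt6 {k : Type*} [Field k] {C : Type*} [Category C] [Fintype C]
    [∀ x y : C, Finite (x ⟶ y)]
    (hEI : ∀ (x : C) (f : x ⟶ x), IsIso f)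
    (hskel : ∀ x y : C, (x ≅ y) → x = y)
    (hord : ∀ x : C, (Nat.card (Aut x) : k) ≠ 0)
    {A : Type*} [Ring A] [Algebra k A] (hA : CategoryAlgebraData k C A)
    (Λ : Submodule k A)
    (hΛ : Λ = Submodule.span k
      {a : A | ∃ (x y : C) (f : x ⟶ y), ¬ IsIso f ∧ a = hA.basis ⟨x, y, f⟩}) :
    ((Ideal.jacobson (⊥ : Ideal A) : Ideal A) : Set A) = (Λ : Set A) ∧
    ∃ φ : A →ₐ[k] (∀ x : C, MonoidAlgebra k (Aut x)),
      Function.Surjective φ ∧ (RingHom.ker (φ : A →+* ∀ x : C, MonoidAlgebra k (Aut x)) : Set A) = (Λ : Set A) := by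
  subst hΛ
  rw [show {a : A | ∃ (x y : C) (f : x ⟶ y), ¬ IsIso f ∧ a = hA.basis ⟨x, y, f⟩}
    = NIso hA from rfl]
  haveI hfin : ∀ x : C, Finite (Aut x) :=
    fun x => Finite.of_injective (fun a => a.hom) (fun a b h => Iso.ext h)
  haveI hssf : ∀ x : C, IsSemisimpleRing (MonoidAlgebra k (Aut x)) := by
    intro x
    haveI : Fintype (Aut x) := Fintype.ofFinite _
    apply isSemisimpleRing_monoidAlgebra
    rw [← Nat.card_eq_fintype_card]
    exact hord x
  haveI hss : IsSemisimpleRing (∀ x : C, MonoidAlgebra k (Aut x)) := inferInstance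
  set φ := phi hEI hA hskel with hφ
  have hsurj : Function.Surjective φ := philin_surjective hEI hA
  have hsurj' : Function.Surjective (φ : A →+* ∀ x : C, MonoidAlgebra k (Aut x)) := hsurj
  have hker : (RingHom.ker (φ : A →+* ∀ x : C, MonoidAlgebra k (Aut x)) : Set A)
      = (Submodule.span k (NIso hA) : Set A) := by
    ext a
    simp only [SetLike.mem_coe, RingHom.mem_ker]
    constructor
    · intro h
      exact mem_span_of_philin_eq_zero hEI hA hskel a h
    · intro h
      exact philin_eq_zero_of_mem_span hEI hA a h
  refine ⟨?_, φ, hsurj, hker⟩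
  apply Set.Subset.antisymm
  · have h1 : Ideal.jacobson (⊥ : Ideal A)
        ≤ RingHom.ker (φ : A →+* ∀ x : C, MonoidAlgebra k (Aut x)) := by
      have h2 := Ideal.comap_jacobson_of_surjective
        (f := (φ : A →+* ∀ x : C, MonoidAlgebra k (Aut x))) hsurj'
        (K := (⊥ : Ideal (∀ x : C, MonoidAlgebra k (Aut x))))
      rw [jacobson_bot_of_isSemisimpleRing] at h2
      calc Ideal.jacobson (⊥ : Ideal A)
          ≤ (Ideal.comap (φ : A →+* ∀ x : C, MonoidAlgebra k (Aut x)) ⊥).jacobson :=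
            Ideal.jacobson_mono bot_le
        _ = Ideal.comap (φ : A →+* ∀ x : C, MonoidAlgebra k (Aut x)) ⊥ := h2.symm
        _ = RingHom.ker (φ : A →+* ∀ x : C, MonoidAlgebra k (Aut x)) := rfl
    intro a ha
    rw [← hker]
    exact h1 ha
  · intro a ha
    exact span_le_jacobson hA hEI a ha
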